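/- Let α ≥ 0 and m ≥ 1 be integers with m ≡ 1 (mod 8), and set n := 4^α·m. Let χ₈ be the real character modulo 8 with χ₈(d) = 1 for d ≡ ±1 (mod 8) and χ₈(d) = −1 for d ≡ ±3 (mod 8), and let χ₋₄ be the character modulo 4 with χ₋₄(d) = 1 for d ≡ 1 (mod 4) and χ₋₄(d) = −1 for d ≡ 3 (mod 4). For an integer k ≥ 2 define A_k := ∑ χ₈(d)^k·exp(2πi·n·d/2^k) and B_k := ∑ χ₋₄(d)·χ₈(d)^k·exp(2πi·n·d/2^k), both sums being over odd integers 1 ≤ d ≤ 2^k. Then: A_k = 2^(k−1) if k is even and k ≤ 2α; A_k = 2√2·4^α if k = 2α+3; and A_k = 0 otherwise. Also: B_k = 2i·4^α if k = 2α+2; B_k = 2√2·i·4^α if k = 2α+3; and B_k = 0 otherwise. -/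

import Mathlib

open Complex Finset Real

noncomputable def gc : ℂ := Complex.exp ((Real.pi : ℂ) * Complex.I / 4)

lemma gc_val : gc = ((Real.sqrt 2 : ℝ) : ℂ) / 2 + ((Real.sqrt 2 : ℝ) : ℂ) / 2 * Complex.I := by
  have h : ((Real.pi : ℂ) * Complex.I / 4) = ((Real.pi / 4 : ℝ) : ℂ) * Complex.I := by
    push_cast; ring
  rw [gc, h, Complex.exp_mul_I, ← Complex.ofReal_cos, ← Complex.ofReal_sin,
    Real.cos_pi_div_four, Real.sin_pi_div_four]
  push_cast
  ring

lemma gc_pow8 : gc ^ 8 = 1 := by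
  rw [gc, ← Complex.exp_nat_mul]
  have : (8 : ℕ) * ((Real.pi : ℂ) * Complex.I / 4) = (1 : ℤ) * (2 * (Real.pi : ℂ) * Complex.I) := by
    push_cast; ring
  rw [this, Complex.exp_int_mul_two_pi_mul_I]

lemma key (a : ℕ) :
    Complex.exp (2 * (Real.pi : ℂ) * Complex.I * (a : ℂ) / 8) = gc ^ (a % 8) := by
  have h : (2 * (Real.pi : ℂ) * Complex.I * (a : ℂ) / 8) = (a : ℕ) * ((Real.pi : ℂ) * Complex.I / 4) := by
    push_cast; ring
  rw [h, Complex.exp_nat_mul, ← gc]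
  conv_lhs => rw [← Nat.div_add_mod a 8]
  rw [pow_add, pow_mul, gc_pow8, one_pow, one_mul]

lemma geom_full (n M : ℕ) (h : M ∣ n) (hM : 0 < M) :
    ∑ t ∈ Finset.range M, Complex.exp (2 * (Real.pi : ℂ) * Complex.I * (n : ℂ) * (t : ℂ) / (M : ℂ)) = (M : ℂ) := by
  obtain ⟨q, rfl⟩ := h
  have hM' : (M : ℂ) ≠ 0 := by exact_mod_cast hM.ne'
  have : ∀ t ∈ Finset.range M,
      Complex.exp (2 * (Real.pi : ℂ) * Complex.I * ((M * q : ℕ) : ℂ) * (t : ℂ) / (M : ℂ)) = 1 := by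
    intro t _
    have he : 2 * (Real.pi : ℂ) * Complex.I * ((M * q : ℕ) : ℂ) * (t : ℂ) / (M : ℂ)
        = ((q * t : ℤ) : ℂ) * (2 * (Real.pi : ℂ) * Complex.I) := by
      push_cast; field_simp
    rw [he, Complex.exp_int_mul_two_pi_mul_I]
  rw [Finset.sum_congr rfl this, Finset.sum_const, Finset.card_range, nsmul_eq_mul, mul_one]

lemma geom_zero (n M : ℕ) (h : ¬ M ∣ n) (hM : 0 < M) :
    ∑ t ∈ Finset.range M, Complex.exp (2 * (Real.pi : ℂ) * Complex.I * (n : ℂ) * (t : ℂ) / (M : ℂ)) = 0 := by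
  have hM' : (M : ℂ) ≠ 0 := by exact_mod_cast hM.ne'
  set z : ℂ := Complex.exp (2 * (Real.pi : ℂ) * Complex.I * (n : ℂ) / (M : ℂ)) with hz
  have hterm : ∀ t : ℕ, Complex.exp (2 * (Real.pi : ℂ) * Complex.I * (n : ℂ) * (t : ℂ) / (M : ℂ)) = z ^ t := by
    intro t
    rw [hz, ← Complex.exp_nat_mul]
    congr 1
    field_simp
  have hzM : z ^ M = 1 := by
    rw [hz, ← Complex.exp_nat_mul]
    have : (M : ℂ) * (2 * (Real.pi : ℂ) * Complex.I * (n : ℂ) / (M : ℂ)) = ((n : ℤ) : ℂ) * (2 * (Real.pi : ℂ) * Complex.I) := by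
      push_cast; field_simp
    rw [this, Complex.exp_int_mul_two_pi_mul_I]
  have hz1 : z ≠ 1 := by
    intro hz1
    rw [hz, Complex.exp_eq_one_iff] at hz1
    obtain ⟨j, hj⟩ := hz1
    apply h
    have hpi : (Real.pi : ℂ) ≠ 0 := by exact_mod_cast Real.pi_ne_zero
    have h2 : (2 * (Real.pi : ℂ) * Complex.I) ≠ 0 := by
      simp [Real.pi_ne_zero, Complex.I_ne_zero]
    field_simp at hj
    have hc : (n : ℂ) = (M : ℂ) * (j : ℂ) := by
      linear_combination hj
    have : (n : ℤ) = (M : ℤ) * j := by exact_mod_cast hc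
    exact Int.natCast_dvd_natCast.mp ⟨j, this⟩
  calc ∑ t ∈ Finset.range M, Complex.exp (2 * (Real.pi : ℂ) * Complex.I * (n : ℂ) * (t : ℂ) / (M : ℂ))
      = ∑ t ∈ Finset.range M, z ^ t := Finset.sum_congr rfl (fun t _ => hterm t)
    _ = (z ^ M - 1) / (z - 1) := geom_sum_eq hz1 M
    _ = 0 := by rw [hzM]; simp

lemma reindex (k : ℕ) (hk : 3 ≤ k) (F : ℕ → ℂ) :
    ∑ d ∈ (Finset.Ioc (0:ℕ) (2^k)).filter (fun d => Odd d), F d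
    = ∑ t ∈ Finset.range (2^(k-3)), ∑ r ∈ ({1,3,5,7} : Finset ℕ), F (8*t+r) := by
  have hM8 : 2 ^ k = 8 * 2 ^ (k - 3) := by
    have h3 : 3 + (k - 3) = k := by omega
    calc 2 ^ k = 2 ^ (3 + (k - 3)) := by rw [h3]
      _ = 8 * 2 ^ (k - 3) := by rw [pow_add]; norm_num
  rw [← Finset.sum_product']
  refine Finset.sum_nbij' (fun d => (d / 8, d % 8)) (fun p => 8 * p.1 + p.2) ?_ ?_ ?_ ?_ ?_
  · intro d hd
    simp only [Finset.mem_filter, Finset.mem_Ioc, Nat.odd_iff] at hd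
    simp only [Finset.mem_product, Finset.mem_range, Finset.mem_insert, Finset.mem_singleton]
    omega
  · intro p hp
    simp only [Finset.mem_product, Finset.mem_range, Finset.mem_insert, Finset.mem_singleton] at hp
    simp only [Finset.mem_filter, Finset.mem_Ioc, Nat.odd_iff]
    omega
  · intro d hd; dsimp only; omega
  · intro p hp
    simp only [Finset.mem_product, Finset.mem_range, Finset.mem_insert, Finset.mem_singleton] at hp
    have h1 : (8 * p.1 + p.2) / 8 = p.1 := by omega
    have h2 : (8 * p.1 + p.2) % 8 = p.2 := by omega
    simp [h1, h2]
  · intro d hd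
    simp only [Finset.mem_filter, Finset.mem_Ioc, Nat.odd_iff] at hd
    congr 1
    dsimp only
    omega

lemma factor (k n : ℕ) (hk : 3 ≤ k) (g : ℕ → ℂ) (hg : ∀ t r, g (8*t+r) = g r) :
    ∑ d ∈ (Finset.Ioc (0:ℕ) (2^k)).filter (fun d => Odd d),
      g d * Complex.exp (2*(Real.pi:ℂ)*Complex.I*(n:ℂ)*(d:ℂ)/((2^k:ℕ):ℂ))
    = (∑ t ∈ Finset.range (2^(k-3)),
        Complex.exp (2*(Real.pi:ℂ)*Complex.I*(n:ℂ)*(t:ℂ)/((2^(k-3):ℕ):ℂ)))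
      * (∑ r ∈ ({1,3,5,7}:Finset ℕ),
        g r * Complex.exp (2*(Real.pi:ℂ)*Complex.I*(n:ℂ)*(r:ℂ)/((2^k:ℕ):ℂ))) := by
  have hM8 : (2:ℕ) ^ k = 8 * 2 ^ (k - 3) := by
    have h3 : 3 + (k - 3) = k := by omega
    calc (2:ℕ) ^ k = 2 ^ (3 + (k - 3)) := by rw [h3]
      _ = 8 * 2 ^ (k - 3) := by rw [pow_add]; norm_num
  have hMne : ((2^(k-3):ℕ):ℂ) ≠ 0 := by
    exact_mod_cast (Nat.pos_of_ne_zero (by positivity)).ne'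
  rw [reindex k hk, Finset.sum_mul_sum]
  refine Finset.sum_congr rfl fun t _ => Finset.sum_congr rfl fun r _ => ?_
  rw [hg]
  have hexp : (2*(Real.pi:ℂ)*Complex.I*(n:ℂ)*((8*t+r:ℕ):ℂ)/((2^k:ℕ):ℂ))
      = 2*(Real.pi:ℂ)*Complex.I*(n:ℂ)*(t:ℂ)/((2^(k-3):ℕ):ℂ)
        + 2*(Real.pi:ℂ)*Complex.I*(n:ℂ)*(r:ℂ)/((2^k:ℕ):ℂ) := by
    have hc : ((2^k : ℕ) : ℂ) = 8 * ((2^(k-3):ℕ):ℂ) := by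
      rw [hM8]; push_cast; ring
    rw [hc]; push_cast; field_simp
  rw [hexp, Complex.exp_add]; ring

lemma eval_dvd (k n : ℕ) (hk : 3 ≤ k) (g : ℕ → ℂ) (hg : ∀ t r, g (8*t+r) = g r)
    (q : ℕ) (hq : n = 2^(k-3) * q) :
    ∑ d ∈ (Finset.Ioc (0:ℕ) (2^k)).filter (fun d => Odd d),
      g d * Complex.exp (2*(Real.pi:ℂ)*Complex.I*(n:ℂ)*(d:ℂ)/((2^k:ℕ):ℂ))
    = ((2^(k-3):ℕ):ℂ) * ∑ r ∈ ({1,3,5,7}:Finset ℕ), g r * gc ^ ((q * r) % 8) := by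
  rw [factor k n hk g hg,
    geom_full n (2^(k-3)) ⟨q, hq⟩ (by positivity)]
  congr 1
  refine Finset.sum_congr rfl fun r _ => ?_
  congr 1
  have hMne : ((2^(k-3):ℕ):ℂ) ≠ 0 := by
    exact_mod_cast (Nat.pos_of_ne_zero (by positivity)).ne'
  have hM8 : (2:ℕ) ^ k = 8 * 2 ^ (k - 3) := by
    have h3 : 3 + (k - 3) = k := by omega
    calc (2:ℕ) ^ k = 2 ^ (3 + (k - 3)) := by rw [h3]
      _ = 8 * 2 ^ (k - 3) := by rw [pow_add]; norm_num
  have hexp : 2*(Real.pi:ℂ)*Complex.I*(n:ℂ)*(r:ℂ)/((2^k:ℕ):ℂ)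
      = 2*(Real.pi:ℂ)*Complex.I*((q*r : ℕ):ℂ)/8 := by
    rw [hq, hM8]; push_cast; field_simp
  rw [hexp, key]

lemma eval_zero (k n : ℕ) (hk : 3 ≤ k) (g : ℕ → ℂ) (hg : ∀ t r, g (8*t+r) = g r)
    (h : ¬ 2^(k-3) ∣ n) :
    ∑ d ∈ (Finset.Ioc (0:ℕ) (2^k)).filter (fun d => Odd d),
      g d * Complex.exp (2*(Real.pi:ℂ)*Complex.I*(n:ℂ)*(d:ℂ)/((2^k:ℕ):ℂ)) = 0 := by
  rw [factor k n hk g hg, geom_zero n (2^(k-3)) h (by positivity), zero_mul]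

lemma gc_sq : gc ^ 2 = Complex.I := by
  have hs : ((Real.sqrt 2 : ℝ):ℂ) * ((Real.sqrt 2:ℝ):ℂ) = 2 := by
    norm_cast; exact Real.mul_self_sqrt (by norm_num)
  rw [gc_val]
  linear_combination (Complex.I/2) * hs
    + (((Real.sqrt 2:ℝ):ℂ)*((Real.sqrt 2:ℝ):ℂ)/4) * Complex.I_sq

lemma gc3 : gc ^ 3 = Complex.I * gc := by
  rw [show (3:ℕ) = 2+1 from rfl, pow_add, gc_sq, pow_one]

lemma gc4 : gc ^ 4 = -1 := by
  rw [show (4:ℕ) = 2*2 from rfl, pow_mul, gc_sq, Complex.I_sq]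

lemma gc5 : gc ^ 5 = -gc := by
  rw [show (5:ℕ) = 4+1 from rfl, pow_add, gc4, pow_one]; ring

lemma gc6 : gc ^ 6 = -Complex.I := by
  rw [show (6:ℕ) = 4+2 from rfl, pow_add, gc4, gc_sq]; ring

lemma gc7 : gc ^ 7 = -(Complex.I * gc) := by
  rw [show (7:ℕ) = 4+3 from rfl, pow_add, gc4, gc3]; ring

lemma sqrt2_eq : ((Real.sqrt 2 : ℝ):ℂ) = gc - Complex.I * gc := by
  rw [gc_val]
  linear_combination (((Real.sqrt 2:ℝ):ℂ)/2) * Complex.I_sq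

lemma c81 : ((ZMod.χ₈ ((1:ℕ):ZMod 8) : ℤ) : ℂ) = 1 := by
  have : (ZMod.χ₈ ((1:ℕ):ZMod 8) : ℤ) = 1 := by decide
  rw [this]; norm_num
lemma c83 : ((ZMod.χ₈ ((3:ℕ):ZMod 8) : ℤ) : ℂ) = -1 := by
  have : (ZMod.χ₈ ((3:ℕ):ZMod 8) : ℤ) = -1 := by decide
  rw [this]; norm_num
lemma c85 : ((ZMod.χ₈ ((5:ℕ):ZMod 8) : ℤ) : ℂ) = -1 := by
  have : (ZMod.χ₈ ((5:ℕ):ZMod 8) : ℤ) = -1 := by decide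
  rw [this]; norm_num
lemma c87 : ((ZMod.χ₈ ((7:ℕ):ZMod 8) : ℤ) : ℂ) = 1 := by
  have : (ZMod.χ₈ ((7:ℕ):ZMod 8) : ℤ) = 1 := by decide
  rw [this]; norm_num
lemma c41 : ((ZMod.χ₄ ((1:ℕ):ZMod 4) : ℤ) : ℂ) = 1 := by
  have : (ZMod.χ₄ ((1:ℕ):ZMod 4) : ℤ) = 1 := by decide
  rw [this]; norm_num
lemma c43 : ((ZMod.χ₄ ((3:ℕ):ZMod 4) : ℤ) : ℂ) = -1 := by
  have : (ZMod.χ₄ ((3:ℕ):ZMod 4) : ℤ) = -1 := by decide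
  rw [this]; norm_num
lemma c45 : ((ZMod.χ₄ ((5:ℕ):ZMod 4) : ℤ) : ℂ) = 1 := by
  have : (ZMod.χ₄ ((5:ℕ):ZMod 4) : ℤ) = 1 := by decide
  rw [this]; norm_num
lemma c47 : ((ZMod.χ₄ ((7:ℕ):ZMod 4) : ℤ) : ℂ) = -1 := by
  have : (ZMod.χ₄ ((7:ℕ):ZMod 4) : ℤ) = -1 := by decide
  rw [this]; norm_num

lemma z8 (t r : ℕ) : ((8*t+r : ℕ) : ZMod 8) = (r : ZMod 8) := by
  push_cast
  have h8 : (8 : ZMod 8) = 0 := by decide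
  rw [h8, zero_mul, zero_add]

lemma z4 (t r : ℕ) : ((8*t+r : ℕ) : ZMod 4) = (r : ZMod 4) := by
  push_cast
  have h8 : (8 : ZMod 4) = 0 := by decide
  rw [h8, zero_mul, zero_add]

lemma sum_four (f : ℕ → ℂ) :
    ∑ r ∈ ({1,3,5,7} : Finset ℕ), f r = f 1 + f 3 + f 5 + f 7 := by
  simp [Finset.sum_insert, Finset.mem_insert]; ring

theorem gauss_sum_two_power
    (α m : ℕ) (hm : 1 ≤ m) (hm8 : m % 8 = 1)
    (n : ℕ) (hn : n = 4 ^ α * m)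
    (k : ℕ) (hk : 2 ≤ k)
    (A B : ℂ)
    (hA : A = ∑ d ∈ (Finset.Ioc (0 : ℕ) (2 ^ k)).filter (fun d => Odd d),
      (((ZMod.χ₈ ((d : ℕ) : ZMod 8) : ℤ) : ℂ)) ^ k *
        Complex.exp (2 * (Real.pi : ℂ) * Complex.I * (n : ℂ) * (d : ℂ) /
          ((2 ^ k : ℕ) : ℂ)))
    (hB : B = ∑ d ∈ (Finset.Ioc (0 : ℕ) (2 ^ k)).filter (fun d => Odd d),
      ((ZMod.χ₄ ((d : ℕ) : ZMod 4) : ℤ) : ℂ) *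
        (((ZMod.χ₈ ((d : ℕ) : ZMod 8) : ℤ) : ℂ)) ^ k *
        Complex.exp (2 * (Real.pi : ℂ) * Complex.I * (n : ℂ) * (d : ℂ) /
          ((2 ^ k : ℕ) : ℂ))) :
    (Even k ∧ k ≤ 2 * α → A = (2 : ℂ) ^ (k - 1)) ∧
    (k = 2 * α + 3 → A = 2 * (Real.sqrt 2 : ℂ) * (4 : ℂ) ^ α) ∧
    (¬(Even k ∧ k ≤ 2 * α) ∧ k ≠ 2 * α + 3 → A = 0) ∧
    (k = 2 * α + 2 → B = 2 * Complex.I * (4 : ℂ) ^ α) ∧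
    (k = 2 * α + 3 → B = 2 * (Real.sqrt 2 : ℂ) * Complex.I * (4 : ℂ) ^ α) ∧
    (k ≠ 2 * α + 2 ∧ k ≠ 2 * α + 3 → B = 0) := by
  have hm2 : m % 2 = 1 := by omega
  have hn2 : n = 2 ^ (2*α) * m := by rw [hn, pow_mul]; norm_num
  have hgA : ∀ t r : ℕ,
      (fun d : ℕ => (((ZMod.χ₈ ((d : ℕ) : ZMod 8) : ℤ) : ℂ)) ^ k) (8*t+r)
      = (fun d : ℕ => (((ZMod.χ₈ ((d : ℕ) : ZMod 8) : ℤ) : ℂ)) ^ k) r := by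
    intro t r; dsimp only; rw [z8]
  have hgB : ∀ t r : ℕ,
      (fun d : ℕ => ((ZMod.χ₄ ((d : ℕ) : ZMod 4) : ℤ) : ℂ) *
        (((ZMod.χ₈ ((d : ℕ) : ZMod 8) : ℤ) : ℂ)) ^ k) (8*t+r)
      = (fun d : ℕ => ((ZMod.χ₄ ((d : ℕ) : ZMod 4) : ℤ) : ℂ) *
        (((ZMod.χ₈ ((d : ℕ) : ZMod 8) : ℤ) : ℂ)) ^ k) r := by
    intro t r; dsimp only; rw [z8, z4]
  rcases (by omega : k = 2 ∨ 3 ≤ k) with hk2 | hk3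
  · -- k = 2
    subst hk2
    have hset : (Finset.Ioc (0:ℕ) (2^2)).filter (fun d => Odd d) = {1,3} := by decide
    rw [hset, Finset.sum_insert (by decide), Finset.sum_singleton] at hA hB
    have E1 : Complex.exp (2*(Real.pi:ℂ)*Complex.I*(n:ℂ)*((1:ℕ):ℂ)/((2^2:ℕ):ℂ))
        = gc ^ ((2*n) % 8) := by
      rw [show (2*(Real.pi:ℂ)*Complex.I*(n:ℂ)*((1:ℕ):ℂ)/((2^2:ℕ):ℂ))
        = 2*(Real.pi:ℂ)*Complex.I*((2*n:ℕ):ℂ)/8 by push_cast; ring, key]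
    have E3 : Complex.exp (2*(Real.pi:ℂ)*Complex.I*(n:ℂ)*((3:ℕ):ℂ)/((2^2:ℕ):ℂ))
        = gc ^ ((6*n) % 8) := by
      rw [show (2*(Real.pi:ℂ)*Complex.I*(n:ℂ)*((3:ℕ):ℂ)/((2^2:ℕ):ℂ))
        = 2*(Real.pi:ℂ)*Complex.I*((6*n:ℕ):ℂ)/8 by push_cast; ring, key]
    simp only [E1, E3, c81, c83, c41, c43] at hA hB
    rcases Nat.eq_zero_or_pos α with hα | hα
    · -- α = 0
      have hnm : n = m := by rw [hn, hα]; ring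
      rw [show (2*n)%8 = 2 by omega, show (6*n)%8 = 6 by omega, gc_sq, gc6] at hA hB
      refine ⟨fun hh => absurd hh.2 (by omega), fun hh => absurd hh (by omega),
        fun _ => by rw [hA]; ring, fun _ => by rw [hB, hα]; ring,
        fun hh => absurd hh (by omega), fun hh => absurd (by omega : 2 = 2*α+2) hh.1⟩
    · -- α ≥ 1
      obtain ⟨β, rfl⟩ : ∃ β, α = β + 1 := ⟨α - 1, by omega⟩
      have h2n : (2*n) % 8 = 0 := by
        rw [show 2*n = 8*(4^β*m) by rw [hn, pow_succ]; ring, Nat.mul_mod_right]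
      have h6n : (6*n) % 8 = 0 := by
        rw [show 6*n = 8*(3*(4^β*m)) by rw [hn, pow_succ]; ring, Nat.mul_mod_right]
      rw [h2n, h6n, pow_zero] at hA hB
      refine ⟨fun _ => by rw [hA]; norm_num, fun hh => absurd hh (by omega),
        fun hh => absurd ⟨by decide, by omega⟩ hh.1, fun hh => absurd hh (by omega),
        fun hh => absurd hh (by omega), fun _ => by rw [hB]; ring⟩
  · -- k ≥ 3
    rcases (by omega : k ≤ 2*α ∨ k = 2*α+1 ∨ k = 2*α+2 ∨ k = 2*α+3 ∨ 2*α+4 ≤ k)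
      with hc | hc | hc | hc | hc
    · -- k ≤ 2α
      have hq : n = 2^(k-3) * (8*(2^(2*α-k)*m)) := by
        have hE : (2:ℕ)^(2*α) = 2^((k-3)+3+(2*α-k)) := by congr 1; omega
        rw [hn2, hE, pow_add, pow_add]; ring
      have hAv := hA.trans (eval_dvd k n hk3 _ hgA _ hq)
      have hBv := hB.trans (eval_dvd k n hk3 _ hgB _ hq)
      rw [sum_four] at hAv hBv
      have e0 : ∀ r : ℕ, ((8*(2^(2*α-k)*m)) * r) % 8 = 0 := by
        intro r
        rw [show (8*(2^(2*α-k)*m)) * r = 8*(2^(2*α-k)*m*r) by ring, Nat.mul_mod_right]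
      simp only [e0, Nat.mul_mod_right, pow_zero, mul_one, c81, c83, c85, c87,
        c41, c43, c45, c47, one_pow] at hAv hBv
      rcases Nat.even_or_odd k with he | ho
      · rw [he.neg_one_pow] at hAv hBv
        refine ⟨fun _ => ?_, fun hh => absurd hh (by omega),
          fun hh => absurd ⟨he, hc⟩ hh.1, fun hh => absurd hh (by omega),
          fun hh => absurd hh (by omega), fun _ => by rw [hBv]; ring⟩
        rw [hAv]
        push_cast
        rw [show k-1 = (k-3)+2 from by omega, pow_add]; ring
      · rw [ho.neg_one_pow] at hAv hBv
        refine ⟨fun hh => absurd hh.1 ?_, fun hh => absurd hh (by omega),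
          fun _ => by rw [hAv]; ring, fun hh => absurd hh (by omega),
          fun hh => absurd hh (by omega), fun _ => by rw [hBv]; ring⟩
        rw [Nat.even_iff]; rw [Nat.odd_iff] at ho; omega
    · -- k = 2α + 1
      have hq : n = 2^(k-3) * (4*m) := by
        rw [hn2, show 2*α = (k-3)+2 from by omega, pow_add]; ring
      have hAv := hA.trans (eval_dvd k n hk3 _ hgA _ hq)
      have hBv := hB.trans (eval_dvd k n hk3 _ hgB _ hq)
      rw [sum_four] at hAv hBv
      have ho : Odd k := by rw [Nat.odd_iff]; omega
      simp only [show ((4*m)*1)%8 = 4 from by omega, show ((4*m)*3)%8 = 4 from by omega,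
        show ((4*m)*5)%8 = 4 from by omega, show ((4*m)*7)%8 = 4 from by omega,
        gc4, c81, c83, c85, c87, c41, c43, c45, c47, one_pow, ho.neg_one_pow] at hAv hBv
      exact ⟨fun hh => absurd hh.1 (by rw [Nat.even_iff]; omega),
        fun hh => absurd hh (by omega), fun _ => by rw [hAv]; ring,
        fun hh => absurd hh (by omega), fun hh => absurd hh (by omega),
        fun _ => by rw [hBv]; ring⟩
    · -- k = 2α + 2
      have hq : n = 2^(k-3) * (2*m) := by
        rw [hn2, show 2*α = (k-3)+1 from by omega, pow_add]; ring
      have hAv := hA.trans (eval_dvd k n hk3 _ hgA _ hq)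
      have hBv := hB.trans (eval_dvd k n hk3 _ hgB _ hq)
      rw [sum_four] at hAv hBv
      have he : Even k := by rw [Nat.even_iff]; omega
      simp only [show ((2*m)*1)%8 = 2 from by omega, show ((2*m)*3)%8 = 6 from by omega,
        show ((2*m)*5)%8 = 2 from by omega, show ((2*m)*7)%8 = 6 from by omega,
        gc_sq, gc6, c81, c83, c85, c87, c41, c43, c45, c47, one_pow,
        he.neg_one_pow] at hAv hBv
      refine ⟨fun hh => absurd hh.2 (by omega), fun hh => absurd hh (by omega),
        fun _ => by rw [hAv]; ring, fun _ => ?_, fun hh => absurd hh (by omega),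
        fun hh => absurd hc hh.1⟩
      rw [hBv]
      push_cast
      rw [show (4:ℂ)^α = 2^(2*α) by rw [show (4:ℂ) = 2^2 by norm_num, ← pow_mul],
        show 2*α = (k-3)+1 from by omega, pow_add]
      ring
    · -- k = 2α + 3
      have hq : n = 2^(k-3) * m := by
        rw [hn2, show 2*α = k-3 from by omega]
      have hAv := hA.trans (eval_dvd k n hk3 _ hgA _ hq)
      have hBv := hB.trans (eval_dvd k n hk3 _ hgB _ hq)
      rw [sum_four] at hAv hBv
      have ho : Odd k := by rw [Nat.odd_iff]; omega
      simp only [show (m*1)%8 = 1 from by omega, show (m*3)%8 = 3 from by omega,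
        show (m*5)%8 = 5 from by omega, show (m*7)%8 = 7 from by omega,
        pow_one, gc3, gc5, gc7, c81, c83, c85, c87, c41, c43, c45, c47, one_pow,
        ho.neg_one_pow] at hAv hBv
      have hc4 : (4:ℂ)^α = 2^(k-3) := by
        rw [show (4:ℂ) = 2^2 by norm_num, ← pow_mul, show 2*α = k-3 from by omega]
      refine ⟨fun hh => absurd hh.2 (by omega), fun _ => ?_,
        fun hh => absurd hc hh.2, fun hh => absurd hh (by omega),
        fun _ => ?_, fun hh => absurd hc hh.2⟩
      · rw [hAv, sqrt2_eq]
        push_cast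
        rw [hc4]
        ring
      · rw [hBv, sqrt2_eq]
        push_cast
        rw [hc4]
        linear_combination ((2:ℂ)^(k-3)*2*gc) * Complex.I_sq
    · -- k ≥ 2α + 4
      have hnd : ¬ (2:ℕ)^(k-3) ∣ n := by
        intro hd
        have h2 : (2:ℕ)^(2*α+1) ∣ n := (pow_dvd_pow 2 (by omega : 2*α+1 ≤ k-3)).trans hd
        rw [hn2] at h2
        have h3 : (2:ℕ)^(2*α)*2 ∣ 2^(2*α)*m := by rwa [← pow_succ]
        have h4 : (2:ℕ) ∣ m :=
          (mul_dvd_mul_iff_left (pow_ne_zero (2*α) (two_ne_zero))).mp h3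
        omega
      have hA0 := hA.trans (eval_zero k n hk3 _ hgA hnd)
      have hB0 := hB.trans (eval_zero k n hk3 _ hgB hnd)
      exact ⟨fun hh => absurd hh.2 (by omega), fun hh => absurd hh (by omega),
        fun _ => hA0, fun hh => absurd hh (by omega), fun hh => absurd hh (by omega),
        fun _ => hB0⟩
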